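/- The unit program 1_A = {a ← a : a ∈ A} is a two-sided identity for sequential composition: for every answer set program P over A, P ∘ 1_A = P and 1_A ∘ P = P. Hence the set of all answer set programs over A forms a finite unital magma under composition. -/

import Mathlib

open Classical Finset

/-- A rule of an answer set program: a head atom, a set of positive body atoms,
and a set of negated body atoms. -/
structure Rule (α : Type*) where
  head : α
  pos : Finset α
  neg : Finset α
deriving DecidableEq

instance {α : Type*} [DecidableEq α] [Fintype α] : Fintype (Rule α) :=
  Fintype.ofEquiv (α × Finset α × Finset α)
    { toFun := fun x => ⟨x.1, x.2.1, x.2.2⟩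
      invFun := fun r => (r.head, r.pos, r.neg)
      left_inv := fun _ => rfl
      right_inv := fun _ => rfl }

variable {α : Type*} [Fintype α] [DecidableEq α]

/-- Program-level negation (the tf/∨/De Morgan construction):
for each head atom `a`, either no rule of `R` has head `a` (then the fact `a` is produced),
or one negated literal is chosen from the body of each rule of `R` with head `a`
(De Morgan + distributivity); heads of facts of `R` are dropped (their body `{t}` negates to `f`). -/
noncomputable def notProg {α : Type*} [Fintype α] [DecidableEq α]
    (R : Finset (Rule α)) : Finset (Rule α) :=
  Finset.univ.filter (fun t =>
    ((∀ s ∈ R, s.head ≠ t.head) ∧ t.pos = ∅ ∧ t.neg = ∅) ∨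
    ((∃ s ∈ R, s.head = t.head) ∧
      ∃ c : Rule α → α ⊕ α,
        (∀ s ∈ R, s.head = t.head →
          Sum.elim (fun b => b ∈ s.pos) (fun b => b ∈ s.neg) (c s)) ∧
        t.pos.image Sum.inl ∪ t.neg.image Sum.inr =
          (R.filter (fun s => s.head = t.head)).image (fun s => Sum.swap (c s))))

/-- Sequential composition of answer set programs. -/
noncomputable def comp {α : Type*} [Fintype α] [DecidableEq α]
    (P R : Finset (Rule α)) : Finset (Rule α) :=
  Finset.univ.filter (fun t => ∃ r ∈ P, ∃ S N : Finset (Rule α),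
    S ⊆ R ∧ N ⊆ notProg R ∧
    S.card = r.pos.card ∧ N.card = r.neg.card ∧
    S.image Rule.head = r.pos ∧ N.image Rule.head = r.neg ∧
    t.head = r.head ∧
    t.pos = (S ∪ N).sup Rule.pos ∧
    t.neg = (S ∪ N).sup Rule.neg)

/-- The unit program `1_A = {a ← a : a ∈ A}`. -/
def unitP (α : Type*) [Fintype α] [DecidableEq α] : Finset (Rule α) :=
  Finset.univ.image (fun a => (⟨a, {a}, ∅⟩ : Rule α))

/-- An interpretation viewed as a fact program. -/
def interp {α : Type*} [Fintype α] [DecidableEq α] (I : Finset α) : Finset (Rule α) :=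
  I.image (fun a => (⟨a, ∅, ∅⟩ : Rule α))

/-- The facts (rules with empty body) of a program. -/
noncomputable def factsOf {α : Type*} [Fintype α] [DecidableEq α]
    (P : Finset (Rule α)) : Finset (Rule α) :=
  P.filter (fun r => r.pos = ∅ ∧ r.neg = ∅)

/-- The van Emden–Kowalski immediate consequence operator. -/
noncomputable def TP {α : Type*} [Fintype α] [DecidableEq α]
    (P : Finset (Rule α)) (I : Finset α) : Finset α :=
  (P.filter (fun r => r.pos ⊆ I ∧ Disjoint r.neg I)).image Rule.head


omit [Fintype α] [DecidableEq α] in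
lemma Rule.ext' {r s : Rule α} (h1 : r.head = s.head) (h2 : r.pos = s.pos)
    (h3 : r.neg = s.neg) : r = s := by
  cases r; cases s; simp_all

lemma mem_unitP_iff {r : Rule α} : r ∈ unitP α ↔ r.pos = {r.head} ∧ r.neg = ∅ := by
  constructor
  · intro h
    simp only [unitP, mem_image, mem_univ, true_and] at h
    obtain ⟨a, ha⟩ := h
    subst ha
    exact ⟨rfl, rfl⟩
  · rintro ⟨h1, h2⟩
    simp only [unitP, mem_image, mem_univ, true_and]
    exact ⟨r.head, (Rule.ext' rfl h1.symm h2.symm)⟩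

lemma unitP_filter (a : α) :
    (unitP α).filter (fun s => s.head = a) = {(⟨a, {a}, ∅⟩ : Rule α)} := by
  ext s
  simp only [mem_filter, mem_singleton]
  constructor
  · rintro ⟨hs, hh⟩
    obtain ⟨h1, h2⟩ := mem_unitP_iff.mp hs
    exact Rule.ext' hh (by rw [h1, hh]) h2
  · rintro rfl
    exact ⟨mem_unitP_iff.mpr ⟨rfl, rfl⟩, rfl⟩

lemma mem_notProg_unitP_iff {t : Rule α} :
    t ∈ notProg (unitP α) ↔ t.pos = ∅ ∧ t.neg = {t.head} := by
  simp only [notProg, mem_filter, mem_univ, true_and]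
  constructor
  · rintro (⟨h, -, -⟩ | ⟨-, c, hc, himg⟩)
    · exact absurd rfl (h (⟨t.head, {t.head}, ∅⟩ : Rule α) (mem_unitP_iff.mpr ⟨rfl, rfl⟩))
    · have hr0mem : (⟨t.head, {t.head}, ∅⟩ : Rule α) ∈ unitP α :=
        mem_unitP_iff.mpr ⟨rfl, rfl⟩
      have hcr0 := hc _ hr0mem rfl
      have hcr0' : c ⟨t.head, {t.head}, ∅⟩ = Sum.inl t.head := by
        rcases h : c ⟨t.head, {t.head}, ∅⟩ with b | b
        · rw [h] at hcr0; simp only [Sum.elim_inl, mem_singleton] at hcr0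
          rw [hcr0]
        · rw [h] at hcr0; simp at hcr0
      rw [unitP_filter, Finset.image_singleton, hcr0'] at himg
      simp only [Sum.swap_inl] at himg
      constructor
      · by_contra hpos
        obtain ⟨b, hb⟩ := Finset.nonempty_iff_ne_empty.mpr hpos
        have : (Sum.inl b : α ⊕ α) ∈ ({Sum.inr t.head} : Finset (α ⊕ α)) := by
          rw [← himg]; exact Finset.mem_union_left _ (Finset.mem_image_of_mem _ hb)
        simp at this
      · ext b
        simp only [Finset.mem_singleton]
        constructor
        · intro hb
          have : (Sum.inr b : α ⊕ α) ∈ ({Sum.inr t.head} : Finset (α ⊕ α)) := by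
            rw [← himg]; exact Finset.mem_union_right _ (Finset.mem_image_of_mem _ hb)
          simpa using this
        · rintro rfl
          have h2 : (Sum.inr t.head : α ⊕ α) ∈ t.pos.image Sum.inl ∪ t.neg.image Sum.inr := by
            rw [himg]; simp
          simp only [Finset.mem_union, Finset.mem_image] at h2
          rcases h2 with ⟨x, -, hx⟩ | ⟨x, hx, hx2⟩
          · exact absurd hx (by simp)
          · obtain rfl : x = t.head := Sum.inr_injective hx2
            exact hx
  · rintro ⟨hpos, hneg⟩
    right
    refine ⟨⟨⟨t.head, {t.head}, ∅⟩, mem_unitP_iff.mpr ⟨rfl, rfl⟩, rfl⟩,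
      fun s => Sum.inl s.head, ?_, ?_⟩
    · intro s hs hh
      obtain ⟨h1, -⟩ := mem_unitP_iff.mp hs
      simp [h1]
    · rw [unitP_filter, hpos, hneg]
      simp

lemma image_head_mk1 (s : Finset α) :
    (s.image (fun a => (⟨a, {a}, ∅⟩ : Rule α))).image Rule.head = s := by
  ext b; simp

lemma image_head_mk2 (s : Finset α) :
    (s.image (fun a => (⟨a, ∅, {a}⟩ : Rule α))).image Rule.head = s := by
  ext b; simp

lemma sup_pos_unit {S : Finset (Rule α)} (h : S ⊆ unitP α) :
    S.sup Rule.pos = S.image Rule.head := by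
  rw [← Finset.sup_singleton_apply S Rule.head]
  exact Finset.sup_congr rfl (fun s hs => (mem_unitP_iff.mp (h hs)).1)

lemma sup_neg_unit {S : Finset (Rule α)} (h : S ⊆ unitP α) :
    S.sup Rule.neg = ∅ := by
  have h2 : S.sup Rule.neg ≤ ⊥ :=
    Finset.sup_le fun s hs => le_of_eq (mem_unitP_iff.mp (h hs)).2
  exact le_bot_iff.mp h2

lemma sup_neg_notUnit {N : Finset (Rule α)} (h : N ⊆ notProg (unitP α)) :
    N.sup Rule.neg = N.image Rule.head := by
  rw [← Finset.sup_singleton_apply N Rule.head]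
  exact Finset.sup_congr rfl (fun s hs => (mem_notProg_unitP_iff.mp (h hs)).2)

lemma sup_pos_notUnit {N : Finset (Rule α)} (h : N ⊆ notProg (unitP α)) :
    N.sup Rule.pos = ∅ := by
  have h2 : N.sup Rule.pos ≤ ⊥ :=
    Finset.sup_le fun s hs => le_of_eq (mem_notProg_unitP_iff.mp (h hs)).1
  exact le_bot_iff.mp h2

/-- the unit program is a two-sided identity for composition,
so programs over `α` form a (finite) unital magma. -/
theorem comp_unit {α : Type*} [Fintype α] [DecidableEq α] :
    ∀ P : Finset (Rule α), comp P (unitP α) = P ∧ comp (unitP α) P = P := by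
  intro P
  constructor
  · ext t
    simp only [comp, mem_filter, mem_univ, true_and]
    constructor
    · rintro ⟨r, hr, S, N, hS, hN, -, -, hSh, hNh, hth, htp, htn⟩
      have ht : t = r := by
        refine Rule.ext' hth ?_ ?_
        · rw [htp, Finset.sup_union, sup_pos_unit hS, sup_pos_notUnit hN, hSh]
          simp
        · rw [htn, Finset.sup_union, sup_neg_unit hS, sup_neg_notUnit hN, hNh]
          simp
      rwa [ht]
    · intro ht
      have hinj1 : Function.Injective (fun a : α => (⟨a, {a}, ∅⟩ : Rule α)) :=
        fun a b h => congrArg Rule.head h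
      have hinj2 : Function.Injective (fun a : α => (⟨a, ∅, {a}⟩ : Rule α)) :=
        fun a b h => congrArg Rule.head h
      have hS : (t.pos.image (fun a => (⟨a, {a}, ∅⟩ : Rule α))) ⊆ unitP α := by
        intro x hx
        simp only [mem_image] at hx
        obtain ⟨a, -, rfl⟩ := hx
        exact mem_unitP_iff.mpr ⟨rfl, rfl⟩
      have hN : (t.neg.image (fun a => (⟨a, ∅, {a}⟩ : Rule α))) ⊆ notProg (unitP α) := by
        intro x hx
        simp only [mem_image] at hx
        obtain ⟨a, -, rfl⟩ := hx
        exact mem_notProg_unitP_iff.mpr ⟨rfl, rfl⟩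
      refine ⟨t, ht, t.pos.image (fun a => ⟨a, {a}, ∅⟩),
        t.neg.image (fun a => ⟨a, ∅, {a}⟩), hS, hN,
        Finset.card_image_of_injective _ hinj1,
        Finset.card_image_of_injective _ hinj2, ?_, ?_, rfl, ?_, ?_⟩
      · exact image_head_mk1 _
      · exact image_head_mk2 _
      · rw [Finset.sup_union, sup_pos_unit hS, sup_pos_notUnit hN, image_head_mk1]
        simp
      · rw [Finset.sup_union, sup_neg_unit hS, sup_neg_notUnit hN, image_head_mk2]
        simp
  · ext t
    simp only [comp, mem_filter, mem_univ, true_and]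
    constructor
    · rintro ⟨r, hr, S, N, hS, -, hScard, hNcard, hSh, -, hth, htp, htn⟩
      obtain ⟨hrp, hrn⟩ := mem_unitP_iff.mp hr
      rw [hrn, Finset.card_empty] at hNcard
      obtain rfl : N = ∅ := Finset.card_eq_zero.mp hNcard
      rw [hrp, Finset.card_singleton] at hScard
      obtain ⟨s, rfl⟩ := Finset.card_eq_one.mp hScard
      have hs : s ∈ P := hS (Finset.mem_singleton_self s)
      have hsh : s.head = r.head := by
        rw [hrp] at hSh
        simpa using hSh
      have htes : t = s :=
        Rule.ext' (by rw [hth, ← hsh]) (by rw [htp]; simp) (by rw [htn]; simp)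
      rwa [htes]
    · intro ht
      exact ⟨⟨t.head, {t.head}, ∅⟩, mem_unitP_iff.mpr ⟨rfl, rfl⟩, {t}, ∅,
        by simpa using ht, Finset.empty_subset _, by simp, by simp, by simp,
        by simp, rfl, by simp, by simp⟩
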